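/- For every integer k ≥ 1, the limit as q → 0⁺ of η(q,k) = ((1 − q/2)^{k+1} − (1 − q)^{k+1}) / (1 + (1 − q)^{k+1} − 2(1 − q/2)^{k+1}) equals +∞. -/

import Mathlib

open Filter

theorem eta_tendsto_at_zero (k : ℕ) (hk : 1 ≤ k) :
    Tendsto (fun q : ℝ =>
        ((1 - q / 2) ^ (k + 1) - (1 - q) ^ (k + 1)) /
          (1 + (1 - q) ^ (k + 1) - 2 * (1 - q / 2) ^ (k + 1)))
      (nhdsWithin 0 (Set.Ioi 0)) atTop := by
  set n := k + 1 with hn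
  have hn2 : 2 ≤ n := by omega
  set N : ℝ → ℝ := fun q => (1 - q / 2) ^ n - (1 - q) ^ n with hN
  set D : ℝ → ℝ := fun q => 1 + (1 - q) ^ n - 2 * (1 - q / 2) ^ n with hD
  -- derivatives of basic pieces
  have h1 : ∀ x : ℝ, HasDerivAt (fun q : ℝ => 1 - q / 2) (-(1/2)) x := by
    intro x
    simpa using ((hasDerivAt_id x).div_const 2).const_sub 1
  have h2 : ∀ x : ℝ, HasDerivAt (fun q : ℝ => 1 - q) (-1) x := by
    intro x
    simpa using (hasDerivAt_id x).const_sub 1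
  have hNd : HasDerivAt N ((n : ℝ) / 2) 0 := by
    have := (((h1 0).pow n).sub ((h2 0).pow n))
    convert this using 1
    · rfl
    · rfl
    · rfl
    simp
    ring
  have hDd : HasDerivAt D 0 0 := by
    have := ((((h2 0).pow n).const_add 1).sub (((h1 0).pow n).const_mul 2))
    convert this using 1
    · rfl
    · rfl
    · rfl
    simp
    ring
  have hsub : Set.Ioi (0:ℝ) ⊆ {x | x ≠ 0} := fun x hx => ne_of_gt hx
  have hN0 : N 0 = 0 := by simp [hN]
  have hD0 : D 0 = 0 := by norm_num [hD]
  -- slope limits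
  have hg : Tendsto (fun q => N q / q) (nhdsWithin 0 (Set.Ioi 0)) (nhds ((n : ℝ) / 2)) := by
    have := (hasDerivAt_iff_tendsto_slope.1 hNd).mono_left (nhdsWithin_mono 0 hsub)
    refine this.congr' ?_
    filter_upwards [self_mem_nhdsWithin] with q hq
    simp [slope, hN0, div_eq_inv_mul]
  have hh : Tendsto (fun q => D q / q) (nhdsWithin 0 (Set.Ioi 0)) (nhds 0) := by
    have := (hasDerivAt_iff_tendsto_slope.1 hDd).mono_left (nhdsWithin_mono 0 hsub)
    refine this.congr' ?_
    filter_upwards [self_mem_nhdsWithin] with q hq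
    simp [slope, hD0, div_eq_inv_mul]
  -- positivity of D on (0,1]
  have hDpos : ∀ q : ℝ, 0 < q → q ≤ 1 → 0 < D q := by
    intro q hq hq1
    have hsc := strictConvexOn_pow hn2
    have ha : (1 - q : ℝ) ∈ Set.Ici (0:ℝ) := by simp; linarith
    have hb : (1 : ℝ) ∈ Set.Ici (0:ℝ) := by simp
    have hab : (1 - q : ℝ) ≠ 1 := by intro h; nlinarith
    have key := hsc.2 ha hb hab (by norm_num : (0:ℝ) < 1/2) (by norm_num : (0:ℝ) < 1/2)
      (by norm_num)
    simp only [smul_eq_mul, one_pow] at key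
    have heq : (1:ℝ)/2 * (1 - q) + 1/2 * 1 = 1 - q/2 := by ring
    rw [heq] at key
    simp only [hD]
    nlinarith [key]
  have hmem : ∀ᶠ q in nhdsWithin (0:ℝ) (Set.Ioi 0), D q / q ∈ Set.Ioi (0:ℝ) := by
    filter_upwards [Ioo_mem_nhdsGT_of_mem (Set.mem_Ico.2 ⟨le_refl (0:ℝ), one_pos⟩)]
      with q hq
    exact div_pos (hDpos q hq.1 hq.2.le) hq.1
  have hh' : Tendsto (fun q => D q / q) (nhdsWithin 0 (Set.Ioi 0))
      (nhdsWithin 0 (Set.Ioi 0)) :=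
    tendsto_nhdsWithin_iff.2 ⟨hh, hmem⟩
  have hinv : Tendsto (fun q => (D q / q)⁻¹) (nhdsWithin 0 (Set.Ioi 0)) atTop :=
    hh'.inv_tendsto_nhdsGT_zero
  have hmul : Tendsto (fun q => N q / q * (D q / q)⁻¹) (nhdsWithin 0 (Set.Ioi 0)) atTop := by
    refine hg.pos_mul_atTop ?_ hinv
    have : (0:ℝ) < n := by positivity
    linarith
  refine hmul.congr' ?_
  filter_upwards [Ioo_mem_nhdsGT_of_mem (Set.mem_Ico.2 ⟨le_refl (0:ℝ), one_pos⟩)] with q hq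
  have hq0 : q ≠ 0 := ne_of_gt hq.1
  show N q / q * (D q / q)⁻¹ = N q / D q
  have hDq : D q ≠ 0 := (hDpos q hq.1 hq.2.le).ne'
  field_simp
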